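/- arXiv:2407.01171 — 2 statements merged into one kernel-verified Lean document; each statement's English description precedes it below -/
import Mathlib

section
/- Let (X,Y) be random variables with joint law ρ and marginals μ, ν. Suppose the deflated conditional expectation operator D satisfies ‖D - D_d‖ ≤ σ, where D f(x) = E[f(Y) | X=x] - E[f(Y)]. Then for any measurable sets A, B with P[X∈A] > 0, |P[Y∈B | X∈A] - P[Y∈B] - ⟨𝟙_A, D_d 𝟙_B⟩ / P[X∈A]| ≤ σ · √(P[Y∈B] / P[X∈A]). -/
open MeasureTheory
open scoped RealInnerProductSpace

/-- Approximation bound (Lemma 1 of the paper). If the deflated conditional expectation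
operator `D` (characterized by `⟨𝟙_A, D 𝟙_B⟩ = ρ(A×B) - μ(A)ν(B)`) is approximated by `D_d`
with `‖D - D_d‖ ≤ σ`, then for measurable `A, B` with `P[X ∈ A] > 0`,
`|P[Y∈B | X∈A] - P[Y∈B] - ⟨𝟙_A, D_d 𝟙_B⟩ / P[X∈A]| ≤ σ √(P[Y∈B]/P[X∈A])`. -/
theorem approximation_bound {𝒳 𝒴 : Type*} [MeasurableSpace 𝒳] [MeasurableSpace 𝒴]
    (μ : Measure 𝒳) (ν : Measure 𝒴) (ρ : Measure (𝒳 × 𝒴))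
    [IsProbabilityMeasure μ] [IsProbabilityMeasure ν] [IsProbabilityMeasure ρ]
    (hμ : ρ.map Prod.fst = μ) (hν : ρ.map Prod.snd = ν)
    (D Dd : Lp ℝ 2 ν →L[ℝ] Lp ℝ 2 μ) (σ : ℝ)
    (hD : ∀ (A : Set 𝒳) (B : Set 𝒴) (hA : MeasurableSet A) (hB : MeasurableSet B),
      ⟪(indicatorConstLp 2 hA (measure_ne_top μ A) (1 : ℝ)),
        D (indicatorConstLp 2 hB (measure_ne_top ν B) (1 : ℝ))⟫
        = (ρ (A ×ˢ B)).toReal - (μ A).toReal * (ν B).toReal)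
    (hσ : ‖D - Dd‖ ≤ σ)
    (A : Set 𝒳) (B : Set 𝒴) (hA : MeasurableSet A) (hB : MeasurableSet B)
    (hApos : 0 < (μ A).toReal) :
    |(ρ (A ×ˢ B)).toReal / (μ A).toReal - (ν B).toReal
        - ⟪(indicatorConstLp 2 hA (measure_ne_top μ A) (1 : ℝ)),
            Dd (indicatorConstLp 2 hB (measure_ne_top ν B) (1 : ℝ))⟫ / (μ A).toReal|
      ≤ σ * Real.sqrt ((ν B).toReal / (μ A).toReal) := by
  set fA := indicatorConstLp 2 hA (measure_ne_top μ A) (1 : ℝ) with hfA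
  set fB := indicatorConstLp 2 hB (measure_ne_top ν B) (1 : ℝ) with hfB
  have hσ0 : 0 ≤ σ := le_trans (norm_nonneg _) hσ
  have hkey : (ρ (A ×ˢ B)).toReal / (μ A).toReal - (ν B).toReal
      - ⟪fA, Dd fB⟫ / (μ A).toReal = ⟪fA, (D - Dd) fB⟫ / (μ A).toReal := by
    have hsub : (D - Dd) fB = D fB - Dd fB := by simp
    rw [hsub, inner_sub_right, hD A B hA hB]
    field_simp
  rw [hkey, abs_div, abs_of_pos hApos]
  have hineq : |⟪fA, (D - Dd) fB⟫| ≤ σ * (Real.sqrt (μ A).toReal * Real.sqrt (ν B).toReal) := by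
    calc |⟪fA, (D - Dd) fB⟫| ≤ ‖fA‖ * ‖(D - Dd) fB‖ := abs_real_inner_le_norm _ _
      _ ≤ ‖fA‖ * (‖D - Dd‖ * ‖fB‖) := by
          gcongr; exact (D - Dd).le_opNorm fB
      _ ≤ ‖fA‖ * (σ * ‖fB‖) := by gcongr
      _ = σ * (‖fA‖ * ‖fB‖) := by ring
      _ ≤ σ * (Real.sqrt (μ A).toReal * Real.sqrt (ν B).toReal) := by
          gcongr
          · rw [hfA, norm_indicatorConstLp (by norm_num) (by norm_num)]
            rw [Real.sqrt_eq_rpow]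
            norm_num
            exact le_rfl
          · rw [hfB, norm_indicatorConstLp (by norm_num) (by norm_num)]
            rw [Real.sqrt_eq_rpow]
            norm_num
            exact le_rfl
  have hsa : 0 < Real.sqrt (μ A).toReal := Real.sqrt_pos.mpr hApos
  have ha : Real.sqrt (μ A).toReal * Real.sqrt (μ A).toReal = (μ A).toReal :=
    Real.mul_self_sqrt hApos.le
  calc |⟪fA, (D - Dd) fB⟫| / (μ A).toReal
      ≤ σ * (Real.sqrt (μ A).toReal * Real.sqrt (ν B).toReal) / (μ A).toReal := by
        gcongr
    _ = σ * Real.sqrt ((ν B).toReal / (μ A).toReal) := by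
        rw [Real.sqrt_div ENNReal.toReal_nonneg]
        field_simp
        linear_combination (σ * Real.sqrt (ν B).toReal) * ha
end

section
/- Let D : H₂ → H₁ be a compact operator with singular values σ₁ ≥ σ₂ ≥ ... and let A be any bounded operator of rank at most d. Then ‖D - A‖ ≥ σ_{d+1} (operator norm), where σ_{d+1} is the (d+1)-st singular value of D. -/
open scoped RealInnerProductSpace

/-- Eckart–Young–Mirsky for compact operators: if `D : H₂ → H₁` has SVD
`D = Σᵢ σᵢ uᵢ ⊗ vᵢ` with nonincreasing nonnegative singular values, and `A` is any
bounded operator of rank at most `d`, then `‖D - A‖ ≥ σ_{d+1}` (0-indexed: `σ d`). -/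
theorem eckart_young_mirsky_lower_bound {H₁ H₂ : Type*}
    [NormedAddCommGroup H₁] [InnerProductSpace ℝ H₁] [CompleteSpace H₁]
    [NormedAddCommGroup H₂] [InnerProductSpace ℝ H₂] [CompleteSpace H₂]
    (u : ℕ → H₁) (v : ℕ → H₂) (σ : ℕ → ℝ)
    (hu : Orthonormal ℝ u) (hv : Orthonormal ℝ v)
    (hσ : Antitone σ) (hσ0 : ∀ i, 0 ≤ σ i)
    (hσlim : Filter.Tendsto σ Filter.atTop (nhds 0))
    (D : H₂ →L[ℝ] H₁)
    (hsvd : ∀ w : H₂, HasSum (fun i : ℕ => (σ i * ⟪v i, w⟫) • u i) (D w))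
    (d : ℕ) (A : H₂ →L[ℝ] H₁)
    (hrank : Module.rank ℝ (LinearMap.range (A : H₂ →ₗ[ℝ] H₁)) ≤ d) :
    σ d ≤ ‖D - A‖ := by
  classical
  set n := d + 1 with hn
  set ov : Fin n → H₂ := fun j => v j with hov
  have hov_on : Orthonormal ℝ ov := hv.comp _ Fin.val_injective
  have hvlin : LinearIndependent ℝ ov := hov_on.linearIndependent
  set V : Submodule ℝ H₂ := Submodule.span ℝ (Set.range ov) with hV
  have hfin : FiniteDimensional ℝ V :=
    FiniteDimensional.span_of_finite ℝ (Set.finite_range _)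
  have hdimV : Module.finrank ℝ V = n := by
    rw [finrank_span_eq_card hvlin, Fintype.card_fin]
  set f : V →ₗ[ℝ] H₁ := (A : H₂ →ₗ[ℝ] H₁).domRestrict V with hf
  -- range of f is contained in range of A
  have hker : LinearMap.ker f ≠ ⊥ := by
    intro h
    have hinj : Function.Injective f := LinearMap.ker_eq_bot.mp h
    set g : V →ₗ[ℝ] LinearMap.range (A : H₂ →ₗ[ℝ] H₁) :=
      f.codRestrict _ (fun x => ⟨x, rfl⟩) with hg
    have hginj : Function.Injective g := by
      intro a b hab
      apply hinj
      exact congrArg Subtype.val hab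
    have h1 : Cardinal.lift.{_} (Module.rank ℝ V)
        ≤ Cardinal.lift.{_} (Module.rank ℝ (LinearMap.range (A : H₂ →ₗ[ℝ] H₁))) :=
      g.lift_rank_le_of_injective hginj
    have h2 : Module.rank ℝ V = n := by
      rw [← Module.finrank_eq_rank, hdimV]
    rw [h2] at h1
    have h3 : Cardinal.lift (Module.rank ℝ (LinearMap.range (A : H₂ →ₗ[ℝ] H₁)))
        ≤ Cardinal.lift ((d : Cardinal)) := Cardinal.lift_le.mpr hrank
    have h4 := h1.trans h3
    rw [Cardinal.lift_natCast, Cardinal.lift_natCast, Nat.cast_le] at h4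
    omega
  obtain ⟨w', hw'mem, hw'ne⟩ := (Submodule.ne_bot_iff _).mp hker
  set w : H₂ := (w' : H₂) with hw
  have hAw : A w = 0 := hw'mem
  have hwV : w ∈ V := w'.2
  have hwne : w ≠ 0 := fun h => hw'ne (Subtype.ext h)
  -- coefficients
  obtain ⟨c, hc⟩ := (Submodule.mem_span_range_iff_exists_fun ℝ).mp hwV
  -- inner products
  have hcoef : ∀ j : Fin n, ⟪v (j : ℕ), w⟫ = c j := by
    intro j
    rw [← hc]
    exact hov_on.inner_right_fintype c j
  -- norm of w
  have hwnorm : ‖w‖ ^ 2 = ∑ j : Fin n, (c j) ^ 2 := by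
    have := hov_on.inner_sum c c Finset.univ
    rw [hc] at this
    rw [← real_inner_self_eq_norm_sq, this]
    simp [sq]
  -- inner products with u
  have hDu : ∀ j : ℕ, ⟪u j, D w⟫ = σ j * ⟪v j, w⟫ := by
    intro j
    have h1 : HasSum (fun i : ℕ => ⟪u j, (σ i * ⟪v i, w⟫) • u i⟫) ⟪u j, D w⟫ :=
      (hsvd w).mapL (innerSL ℝ (u j))
    have h2 : (fun i : ℕ => ⟪u j, (σ i * ⟪v i, w⟫) • u i⟫)
        = fun i : ℕ => if i = j then σ j * ⟪v j, w⟫ else 0 := by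
      funext i
      rw [real_inner_smul_right]
      by_cases hij : i = j
      · subst hij; simp [real_inner_self_eq_norm_sq, hu.1 i]
      · rw [hu.2 (Ne.symm hij)]; simp [hij]
    rw [h2] at h1
    exact (h1.unique (hasSum_ite_eq j _))
  -- Bessel
  have hbessel : ∑ j ∈ Finset.range n, ‖⟪u j, D w⟫‖ ^ 2 ≤ ‖D w‖ ^ 2 :=
    hu.sum_inner_products_le (D w)
  have hsum : ∑ j ∈ Finset.range n, ‖⟪u j, D w⟫‖ ^ 2
      = ∑ j : Fin n, (σ (j : ℕ) * c j) ^ 2 := by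
    rw [Finset.sum_range fun j => ‖⟪u j, D w⟫‖ ^ 2]
    congr 1
    funext j
    rw [hDu, hcoef, Real.norm_eq_abs, sq_abs]
  have hlow : σ d ^ 2 * ‖w‖ ^ 2 ≤ ‖D w‖ ^ 2 := by
    calc σ d ^ 2 * ‖w‖ ^ 2 = ∑ j : Fin n, σ d ^ 2 * (c j) ^ 2 := by
          rw [hwnorm, Finset.mul_sum]
      _ ≤ ∑ j : Fin n, (σ (j : ℕ) * c j) ^ 2 := by
          apply Finset.sum_le_sum
          intro j _
          rw [mul_pow]
          apply mul_le_mul_of_nonneg_right _ (sq_nonneg _)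
          have : σ d ≤ σ (j : ℕ) := hσ (Nat.le_of_lt_succ j.2)
          exact pow_le_pow_left₀ (hσ0 d) this 2
      _ = ∑ j ∈ Finset.range n, ‖⟪u j, D w⟫‖ ^ 2 := hsum.symm
      _ ≤ ‖D w‖ ^ 2 := hbessel
  have hwpos : (0:ℝ) < ‖w‖ := norm_pos_iff.mpr hwne
  have hkey : σ d * ‖w‖ ≤ ‖D w‖ := by
    have h1 : (σ d * ‖w‖) ^ 2 ≤ ‖D w‖ ^ 2 := by rw [mul_pow]; exact hlow
    have h2 : 0 ≤ σ d * ‖w‖ := mul_nonneg (hσ0 d) (norm_nonneg _)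
    exact le_of_pow_le_pow_left₀ two_ne_zero (norm_nonneg _) h1
  have hDA : ‖D w‖ = ‖(D - A) w‖ := by
    simp [ContinuousLinearMap.sub_apply, hAw]
  have hle : ‖(D - A) w‖ ≤ ‖D - A‖ * ‖w‖ := (D - A).le_opNorm w
  have : σ d * ‖w‖ ≤ ‖D - A‖ * ‖w‖ := by
    rw [hDA] at hkey
    exact hkey.trans hle
  exact le_of_mul_le_mul_right (by linarith) hwpos
end
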